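/- Let S_n be a random walk on ℤ^d with i.i.d. steps and τ its first return time to the origin. Suppose (Q_n) is a positive, regularly varying sequence with index -γ, γ > 1, such that: (i) P{S_n = x} ≤ Q_n for all x ∈ ℤ^d and n ≥ 1; (ii) for every fixed k, sup_{x ∈ ℤ^d} |P{S_{n-k} = x} - P{S_n = x}| = o(Q_n). Let p = P{τ < ∞} and let r_n → ∞ be any sequence. Then sup_{x : ‖x‖ > r_n} |P{S_n = x, τ > n} - (1-p) P{S_n = x}| = o(Q_n) as n → ∞. -/

import Mathlib

/-- A positive sequence `a` is regularly varying at infinity with index `ρ`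
if `a ⌊l·n⌋ / a n → l ^ ρ` for every `l > 0`. -/
def RegVar (a : ℕ → ℝ) (ρ : ℝ) : Prop :=
  ∀ l : ℝ, 0 < l →
    Filter.Tendsto (fun n : ℕ => a ⌊l * (n : ℝ)⌋₊ / a n) Filter.atTop (nhds (l ^ ρ))

open MeasureTheory Filter Finset ProbabilityTheory
open scoped ENNReal

lemma floor_mul_meas (n : ℕ) : Measurable (fun l : ℝ => ⌊l * n⌋₊) := by
  have h : Monotone (fun l : ℝ => ⌊l * n⌋₊) := fun a b hab =>
    Nat.floor_mono (mul_le_mul_of_nonneg_right hab (Nat.cast_nonneg n))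
  exact h.measurable

/-- Egorov-like selection: a large measurable subset of `[a,b]` on which the
regular-variation bound `Q ⌊l n⌋ ≤ c * Q n` holds uniformly from some `N` on. -/
lemma egorov_like (Q : ℕ → ℝ) (hQpos : ∀ n, 1 ≤ n → 0 < Q n) (γ : ℝ)
    (hQrv : RegVar Q (-γ)) (a b c : ℝ) (ha : 0 < a)
    (hc : ∀ l ∈ Set.Icc a b, l ^ (-γ) < c)
    (δ : ℝ≥0∞) (hδ : 0 < δ) :
    ∃ (A : Set ℝ) (N : ℕ), MeasurableSet A ∧ A ⊆ Set.Icc a b ∧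
      volume (Set.Icc a b \ A) < δ ∧
      ∀ l ∈ A, ∀ n : ℕ, N ≤ n → 1 ≤ n → Q ⌊l * n⌋₊ ≤ c * Q n := by
  classical
  set E : ℕ → Set ℝ := fun N =>
    Set.Icc a b ∩ ⋂ n : ℕ, {l : ℝ | N ≤ n ∧ 1 ≤ n → Q ⌊l * n⌋₊ ≤ c * Q n} with hE
  have hEmeas : ∀ N, MeasurableSet (E N) := by
    intro N
    refine measurableSet_Icc.inter (MeasurableSet.iInter fun n => ?_)
    by_cases h : N ≤ n ∧ 1 ≤ n
    · have : {l : ℝ | N ≤ n ∧ 1 ≤ n → Q ⌊l * n⌋₊ ≤ c * Q n}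
          = (fun l : ℝ => ⌊l * n⌋₊) ⁻¹' {k | Q k ≤ c * Q n} := by
        ext l; simp [h]
      rw [this]
      exact floor_mul_meas n ((Set.to_countable _).measurableSet)
    · have : {l : ℝ | N ≤ n ∧ 1 ≤ n → Q ⌊l * n⌋₊ ≤ c * Q n} = Set.univ := by
        ext l; simp only [Set.mem_setOf_eq, Set.mem_univ, iff_true]
        intro hh; exact absurd hh h
      rw [this]; exact MeasurableSet.univ
  have hEmono : Monotone E := by
    intro N M hNM l hl
    refine ⟨hl.1, ?_⟩
    have := hl.2
    simp only [Set.mem_iInter, Set.mem_setOf_eq] at this ⊢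
    intro n hn
    exact this n ⟨le_trans hNM hn.1, hn.2⟩
  have hcover : Set.Icc a b ⊆ ⋃ N, E N := by
    intro l hl
    have hl0 : 0 < l := lt_of_lt_of_le ha hl.1
    have htend := hQrv l hl0
    have hev : ∀ᶠ n : ℕ in atTop, Q ⌊l * n⌋₊ / Q n < c :=
      htend.eventually_lt_const (hc l hl)
    obtain ⟨N0, hN0⟩ := hev.exists_forall_of_atTop
    refine Set.mem_iUnion.2 ⟨N0, hl, ?_⟩
    simp only [Set.mem_iInter, Set.mem_setOf_eq]
    intro n hn
    have hQn := hQpos n hn.2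
    have := hN0 n hn.1
    calc Q ⌊l * n⌋₊ = Q ⌊l * n⌋₊ / Q n * Q n := by field_simp
    _ ≤ c * Q n := by nlinarith
  -- measure of the complements tends to 0
  have hanti : Antitone fun N => Set.Icc a b \ E N := fun N M h => Set.diff_subset_diff_right (hEmono h)
  have hiInter : (⋂ N, Set.Icc a b \ E N) = ∅ := by
    ext l
    simp only [Set.mem_iInter, Set.mem_diff, Set.mem_empty_iff_false, iff_false, not_forall]
    by_cases hl : l ∈ Set.Icc a b
    · obtain ⟨N, hN⟩ := Set.mem_iUnion.1 (hcover hl)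
      exact ⟨N, fun h => h.2 hN⟩
    · exact ⟨0, fun h => hl h.1⟩
  have htm : Tendsto (fun N => volume (Set.Icc a b \ E N)) atTop
      (nhds (volume (⋂ N, Set.Icc a b \ E N))) :=
    tendsto_measure_iInter_atTop
      (fun N => (measurableSet_Icc.diff (hEmeas N)).nullMeasurableSet) hanti
      ⟨0, ((measure_mono Set.diff_subset).trans_lt measure_Icc_lt_top).ne⟩
  rw [hiInter, measure_empty] at htm
  have := (htm.eventually_lt_const hδ).exists_forall_of_atTop
  obtain ⟨N1, hN1⟩ := this
  refine ⟨E N1, N1, hEmeas N1, Set.inter_subset_left, hN1 N1 le_rfl, ?_⟩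
  intro l hl n hn hn1
  have := hl.2
  simp only [Set.mem_iInter, Set.mem_setOf_eq] at this
  exact this n ⟨hn, hn1⟩

lemma floor_eq_of_Ico {j n : ℕ} (hn : 1 ≤ n) {l : ℝ}
    (hl : l ∈ Set.Ico ((j:ℝ)/n) (((j:ℝ)+1)/n)) : ⌊l * n⌋₊ = j := by
  have hn0 : (0:ℝ) < n := by exact_mod_cast hn
  have h1 : (j:ℝ) ≤ l * n := by
    rw [← div_le_iff₀ hn0]; exact hl.1
  have h2 : l * n < (j:ℝ) + 1 := by
    rw [← lt_div_iff₀ hn0]; exact hl.2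
  rw [Nat.floor_eq_iff (le_trans (Nat.cast_nonneg j) h1)]
  exact ⟨h1, h2⟩

lemma card_bound {B : Finset ℕ} {U : Set ℝ} (hU : MeasurableSet U)
    (I : ℕ → Set ℝ) (hIm : ∀ t ∈ B, MeasurableSet (I t))
    (hsub : ∀ t ∈ B, I t ⊆ U)
    (hdisj : (↑B : Set ℕ).PairwiseDisjoint I)
    (c : ℝ) (hc : 0 < c) (hvol : ∀ t ∈ B, ENNReal.ofReal c ≤ volume (I t))
    {d : ℝ} (hd : 0 < d) (hUvol : volume U < ENNReal.ofReal d) :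
    (B.card : ℝ) * c < d := by
  have hsum : (B.card : ℝ≥0∞) * ENNReal.ofReal c ≤ volume U := by
    calc (B.card : ℝ≥0∞) * ENNReal.ofReal c = ∑ _t ∈ B, ENNReal.ofReal c := by
          rw [Finset.sum_const, nsmul_eq_mul]
      _ ≤ ∑ t ∈ B, volume (I t) := Finset.sum_le_sum hvol
      _ = volume (⋃ t ∈ B, I t) := (measure_biUnion_finset hdisj hIm).symm
      _ ≤ volume U := measure_mono (Set.iUnion₂_subset hsub)
  have h2 : ENNReal.ofReal ((B.card : ℝ) * c) < ENNReal.ofReal d := by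
    rw [ENNReal.ofReal_mul (Nat.cast_nonneg _), ENNReal.ofReal_natCast]
    exact lt_of_le_of_lt hsum hUvol
  exact (ENNReal.ofReal_lt_ofReal_iff hd).1 h2

lemma counting (A A' : Set ℝ) (hAm : MeasurableSet A) (hA'm : MeasurableSet A')
    (hvol : volume (Set.Icc (4:ℝ) 8 \ A) < ENNReal.ofReal (1/100))
    (hvol' : volume (Set.Icc (1/8:ℝ) 1 \ A') < ENNReal.ofReal (1/100))
    (n m : ℕ) (hn : 1 ≤ n) (hm1 : n ≤ m) (hm2 : m ≤ 3 * n) :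
    ∃ j : ℕ, 4 * n ≤ j ∧ j < 8 * n ∧ (∃ l ∈ A, ⌊l * (n:ℝ)⌋₊ = j) ∧
      (∃ l' ∈ A', ⌊l' * (j:ℝ)⌋₊ = m) := by
  classical
  have hn0 : (0:ℝ) < n := by exact_mod_cast hn
  set T0 : ℕ := (4*n+8)/9 with hT0
  have hT9 : 9 * T0 ≤ 4*n + 8 ∧ 4*n + 8 < 9*(T0+1) := by omega
  set jf : ℕ → ℕ := fun t => 4*n + 9*t with hjf
  have hjrange : ∀ t, t < T0 → 4 * n ≤ jf t ∧ jf t + 1 ≤ 8 * n := by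
    intro t ht; constructor
    · simp [hjf]
    · have : 9 * (t+1) ≤ 9 * T0 := by omega
      simp only [hjf]; omega
  -- interval lemma for the first family
  have hIa : ∀ t, t < T0 → ∀ l ∈ Set.Ico ((jf t : ℝ)/n) (((jf t : ℝ)+1)/n),
      l ∈ Set.Icc (4:ℝ) 8 ∧ ⌊l * (n:ℝ)⌋₊ = jf t := by
    intro t ht l hl
    obtain ⟨hj1, hj2⟩ := hjrange t ht
    have hj1' : (4:ℝ) * n ≤ jf t := by exact_mod_cast hj1
    have hj2' : (jf t : ℝ) + 1 ≤ 8 * n := by exact_mod_cast hj2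
    refine ⟨⟨?_, ?_⟩, floor_eq_of_Ico hn hl⟩
    · have h4 : (4:ℝ) ≤ (jf t : ℝ)/n := by rw [le_div_iff₀ hn0]; linarith
      linarith [hl.1]
    · have h8 : ((jf t : ℝ)+1)/n ≤ 8 := by rw [div_le_iff₀ hn0]; linarith
      linarith [hl.2]
  -- interval lemma for the second family
  have hKa : ∀ t, t < T0 → ∀ l ∈ Set.Ico ((m : ℝ)/(jf t)) (((m : ℝ)+1)/(jf t)),
      l ∈ Set.Icc (1/8:ℝ) 1 ∧ ⌊l * (jf t : ℝ)⌋₊ = m := by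
    intro t ht l hl
    obtain ⟨hj1, hj2⟩ := hjrange t ht
    have hj0 : 1 ≤ jf t := by omega
    have hj0' : (0:ℝ) < jf t := by exact_mod_cast hj0
    have hm' : (n:ℝ) ≤ m := by exact_mod_cast hm1
    have hj2' : (jf t : ℝ) + 1 ≤ 8 * n := by exact_mod_cast hj2
    have hjm : (jf t : ℝ) ≥ m + 1 := by
      have : m + 1 ≤ jf t := by omega
      exact_mod_cast this
    refine ⟨⟨?_, ?_⟩, floor_eq_of_Ico hj0 hl⟩
    · have : (1/8:ℝ) ≤ (m:ℝ)/(jf t) := by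
        rw [div_le_div_iff₀ (by norm_num) hj0']
        have : (jf t:ℝ) ≤ 8 * m := by
          calc (jf t:ℝ) ≤ 8 * n - 1 := by linarith
          _ ≤ 8 * m := by linarith
        linarith
      linarith [hl.1]
    · have : ((m:ℝ)+1)/(jf t) ≤ 1 := by
        rw [div_le_one hj0']; linarith
      linarith [hl.2]
  set Bada : Finset ℕ := (range T0).filter (fun t => ¬ ∃ l ∈ A, ⌊l * (n:ℝ)⌋₊ = jf t) with hBada
  set Badb : Finset ℕ := (range T0).filter
      (fun t => ¬ ∃ l' ∈ A', ⌊l' * ((jf t : ℕ):ℝ)⌋₊ = m) with hBadb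
  -- card of Bada
  have hcarda : (Bada.card : ℝ) * (1/n) < 1/100 := by
    refine card_bound (measurableSet_Icc.diff hAm)
      (fun t => Set.Ico ((jf t : ℝ)/n) (((jf t : ℝ)+1)/n))
      (fun t _ => measurableSet_Ico) ?_ ?_ (1/n) (by positivity) ?_ (by norm_num) hvol
    · intro t ht l hl
      have htr : t < T0 := by
        have := Finset.mem_filter.1 ht; exact Finset.mem_range.1 this.1
      obtain ⟨hIcc, hfloor⟩ := hIa t htr l hl
      refine ⟨hIcc, fun hlA => ?_⟩
      exact (Finset.mem_filter.1 ht).2 ⟨l, hlA, hfloor⟩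
    · intro t ht s hs hts
      have htr : t < T0 := Finset.mem_range.1 (Finset.mem_filter.1 ht).1
      have hsr : s < T0 := Finset.mem_range.1 (Finset.mem_filter.1 hs).1
      rw [Function.onFun, Set.disjoint_left]
      intro l hlt hls
      exact hts (by
        have h1 := (hIa t htr l hlt).2
        have h2 := (hIa s hsr l hls).2
        have : jf t = jf s := h1 ▸ h2 ▸ rfl
        simp only [hjf] at this; omega)
    · intro t ht
      have : volume (Set.Ico ((jf t : ℝ)/n) (((jf t : ℝ)+1)/n)) = ENNReal.ofReal (1/n) := by
        rw [Real.volume_Ico]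
        congr 1
        field_simp
        ring
      rw [this]
  -- card of Badb
  have hcardb : (Badb.card : ℝ) * (1/(8*n)) < 1/100 := by
    refine card_bound (measurableSet_Icc.diff hA'm)
      (fun t => Set.Ico ((m : ℝ)/(jf t)) (((m : ℝ)+1)/(jf t)))
      (fun t _ => measurableSet_Ico) ?_ ?_ (1/(8*n)) (by positivity) ?_ (by norm_num) hvol'
    · intro t ht l hl
      have htr : t < T0 := Finset.mem_range.1 (Finset.mem_filter.1 ht).1
      obtain ⟨hIcc, hfloor⟩ := hKa t htr l hl
      refine ⟨hIcc, fun hlA => ?_⟩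
      exact (Finset.mem_filter.1 ht).2 ⟨l, hlA, hfloor⟩
    · intro t ht s hs hts
      have htr : t < T0 := Finset.mem_range.1 (Finset.mem_filter.1 ht).1
      have hsr : s < T0 := Finset.mem_range.1 (Finset.mem_filter.1 hs).1
      rw [Function.onFun, Set.disjoint_left]
      intro l hlt hls
      have h1 := (hKa t htr l hlt).2
      have h2 := (hKa s hsr l hls).2
      have key : ∀ a b : ℕ, a < T0 → b < T0 → jf a + 9 ≤ jf b →
          l ∈ Set.Ico ((m : ℝ)/(jf a)) (((m : ℝ)+1)/(jf a)) →
          l ∈ Set.Ico ((m : ℝ)/(jf b)) (((m : ℝ)+1)/(jf b)) → False := by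
        intro a b har hbr h9 hla hlb
        have hja1 : 1 ≤ jf a := by have := (hjrange a har).1; omega
        have hja0 : (0:ℝ) < jf a := by exact_mod_cast hja1
        have hjb0 : (0:ℝ) < jf b := by
          have : 1 ≤ jf b := by have := (hjrange b hbr).1; omega
          exact_mod_cast this
        have hmr : (n:ℝ) ≤ m := by exact_mod_cast hm1
        have h8 : (jf a : ℝ) + 1 ≤ 8 * n := by exact_mod_cast (hjrange a har).2
        have h9' : (jf a : ℝ) + 9 ≤ jf b := by exact_mod_cast h9
        have hle : ((m:ℝ)+1)/(jf b) ≤ (m:ℝ)/(jf a) := by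
          rw [div_le_div_iff₀ hjb0 hja0]; nlinarith
        have hx1 := hla.1
        have hx2 := hlb.2
        linarith
      have : jf t = jf s := by
        by_contra hne
        rcases lt_or_gt_of_ne hne with hlt' | hlt'
        · have h9 : jf t + 9 ≤ jf s := by simp only [hjf] at hlt' ⊢; omega
          exact key t s htr hsr h9 hlt hls
        · have h9 : jf s + 9 ≤ jf t := by simp only [hjf] at hlt' ⊢; omega
          exact key s t hsr htr h9 hls hlt
      simp only [hjf] at this
      exact hts (by omega)
    · intro t ht
      have htr : t < T0 := Finset.mem_range.1 (Finset.mem_filter.1 ht).1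
      obtain ⟨hj1, hj2⟩ := hjrange t htr
      have hj0' : (0:ℝ) < jf t := by
        have : 1 ≤ jf t := by omega
        exact_mod_cast this
      have hvolK : volume (Set.Ico ((m : ℝ)/(jf t)) (((m : ℝ)+1)/(jf t)))
          = ENNReal.ofReal (1/(jf t)) := by
        rw [Real.volume_Ico]
        congr 1
        field_simp
        ring
      rw [hvolK]
      apply ENNReal.ofReal_le_ofReal
      have hj8 : (jf t : ℝ) ≤ 8 * n := by
        have : jf t ≤ 8 * n := by omega
        exact_mod_cast this
      rw [div_le_div_iff₀ (by positivity) hj0']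
      linarith
  -- combine the counts
  have hT4 : 4*n ≤ 9 * T0 := by omega
  have hTr : 4 * (n:ℝ) / 9 ≤ (T0:ℝ) := by
    have : (4*n : ℝ) ≤ 9*(T0:ℝ) := by exact_mod_cast hT4
    linarith
  have ha : (Bada.card : ℝ) < n/100 := by
    have := (div_lt_div_iff₀ hn0 (by norm_num : (0:ℝ) < 100)).1
      (by rwa [mul_one_div] at hcarda)
    linarith
  have hb : (Badb.card : ℝ) < 8*n/100 := by
    have h8n : (0:ℝ) < 8*n := by positivity
    have := (div_lt_div_iff₀ h8n (by norm_num : (0:ℝ) < 100)).1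
      (by rwa [mul_one_div] at hcardb)
    linarith
  have hsumlt : ((Bada.card + Badb.card : ℕ) : ℝ) < (T0:ℝ) := by
    push_cast
    nlinarith
  have hnat : Bada.card + Badb.card < T0 := by exact_mod_cast hsumlt
  have hnsub : ¬ (range T0 ⊆ Bada ∪ Badb) := by
    intro hsub
    have := Finset.card_le_card hsub
    have := Finset.card_union_le Bada Badb
    rw [Finset.card_range] at *
    omega
  obtain ⟨t, htmem, htnot⟩ := Finset.not_subset.1 hnsub
  have htr : t < T0 := Finset.mem_range.1 htmem
  have hta : t ∉ Bada := fun h => htnot (Finset.mem_union_left _ h)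
  have htb : t ∉ Badb := fun h => htnot (Finset.mem_union_right _ h)
  have hA1 : ∃ l ∈ A, ⌊l * (n:ℝ)⌋₊ = jf t := by
    by_contra h; exact hta (Finset.mem_filter.2 ⟨htmem, h⟩)
  have hA2 : ∃ l' ∈ A', ⌊l' * ((jf t:ℕ):ℝ)⌋₊ = m := by
    by_contra h; exact htb (Finset.mem_filter.2 ⟨htmem, h⟩)
  exact ⟨jf t, (hjrange t htr).1, by have := (hjrange t htr).2; omega, hA1, hA2⟩

lemma regvar_window (Q : ℕ → ℝ) (hQpos : ∀ n, 1 ≤ n → 0 < Q n) (γ : ℝ) (hγ : 1 < γ)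
    (hQrv : RegVar Q (-γ)) :
    ∃ C : ℝ, 0 < C ∧ ∃ N : ℕ, 1 ≤ N ∧ ∀ n, N ≤ n → ∀ m, n ≤ m → m ≤ 3 * n →
      Q m ≤ C * Q n := by
  have hγ0 : (0:ℝ) < γ := by linarith
  obtain ⟨A, N₁, hAm, hAsub, hvol, hAprop⟩ := egorov_like Q hQpos γ hQrv 4 8 2 (by norm_num)
    (fun l hl => lt_of_le_of_lt
      (Real.rpow_le_one_of_one_le_of_nonpos (by linarith [hl.1]) (by linarith)) one_lt_two)
    (ENNReal.ofReal (1/100)) (by norm_num)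
  have hc2 : ∀ l ∈ Set.Icc (1/8:ℝ) 1, l ^ (-γ) < (8:ℝ)^γ + 1 := by
    intro l hl
    have hl0 : (0:ℝ) < l := lt_of_lt_of_le (by norm_num) hl.1
    have h18 : ((1/8:ℝ)) ^ (-γ) = (8:ℝ)^γ := by
      rw [one_div, Real.inv_rpow (by norm_num : (0:ℝ) ≤ 8),
        ← Real.rpow_neg (by norm_num : (0:ℝ) ≤ 8), neg_neg]
    have hle : l ^ (-γ) ≤ ((1/8:ℝ)) ^ (-γ) := by
      apply Real.rpow_le_rpow_of_nonpos (by norm_num) hl.1 (by linarith)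
    have hpos : (0:ℝ) < (8:ℝ)^γ := Real.rpow_pos_of_pos (by norm_num) _
    rw [h18] at hle
    linarith
  obtain ⟨A', N₂, hA'm, hA'sub, hvol', hA'prop⟩ := egorov_like Q hQpos γ hQrv (1/8) 1
    ((8:ℝ)^γ + 1) (by norm_num) hc2 (ENNReal.ofReal (1/100)) (by norm_num)
  refine ⟨2 * ((8:ℝ)^γ + 1), by positivity, max (max N₁ N₂) 1, le_max_right _ _, ?_⟩
  intro n hn m hm1 hm2
  have hn1 : 1 ≤ n := le_trans (le_max_right _ _) hn
  have hnN₁ : N₁ ≤ n := le_trans (le_trans (le_max_left _ _) (le_max_left _ _)) hn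
  have hnN₂ : N₂ ≤ n := le_trans (le_trans (le_max_right _ _) (le_max_left _ _)) hn
  obtain ⟨j, hj1, hj2, ⟨l, hlA, hlf⟩, ⟨l', hl'A, hl'f⟩⟩ :=
    counting A A' hAm hA'm hvol hvol' n m hn1 hm1 hm2
  have hj0 : 1 ≤ j := by omega
  have hQj : Q j ≤ 2 * Q n := by
    have := hAprop l hlA n hnN₁ hn1
    rwa [hlf] at this
  have hQm : Q m ≤ ((8:ℝ)^γ + 1) * Q j := by
    have := hA'prop l' hl'A j (by omega) hj0
    rwa [hl'f] at this
  have h8pos : (0:ℝ) < (8:ℝ)^γ + 1 := by positivity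
  calc Q m ≤ ((8:ℝ)^γ + 1) * Q j := hQm
    _ ≤ ((8:ℝ)^γ + 1) * (2 * Q n) := by nlinarith
    _ = 2 * ((8:ℝ)^γ + 1) * Q n := by ring

section
variable (Q : ℕ → ℝ) (hQpos : ∀ n, 1 ≤ n → 0 < Q n) (γ : ℝ) (hγ : 1 < γ)
    (hQrv : RegVar Q (-γ))

include hQpos hγ hQrv in
lemma regvar_halving :
    ∃ θ : ℝ, 0 < θ ∧ 2 * θ < 1 ∧ ∃ N : ℕ, 1 ≤ N ∧ ∀ n, N ≤ n → Q (2*n) ≤ θ * Q n := by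
  have h2γ : (2:ℝ) ^ (-γ) < 1/2 := by
    have := Real.rpow_lt_rpow_of_exponent_lt (by norm_num : (1:ℝ) < 2)
      (by linarith : -γ < -1)
    rwa [Real.rpow_neg_one, ← one_div] at this
  have hpos : (0:ℝ) < (2:ℝ) ^ (-γ) := Real.rpow_pos_of_pos (by norm_num) _
  set θ : ℝ := ((2:ℝ)^(-γ) + 1/2)/2 with hθ
  refine ⟨θ, by positivity, by rw [hθ]; linarith, ?_⟩
  have htd := hQrv 2 (by norm_num)
  have hev : ∀ᶠ n : ℕ in atTop, Q ⌊(2:ℝ) * n⌋₊ / Q n < θ :=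
    htd.eventually_lt_const (by rw [hθ]; linarith)
  obtain ⟨N0, hN0⟩ := hev.exists_forall_of_atTop
  refine ⟨max N0 1, le_max_right _ _, ?_⟩
  intro n hn
  have hn1 : 1 ≤ n := le_trans (le_max_right _ _) hn
  have hQn := hQpos n hn1
  have h := hN0 n (le_trans (le_max_left _ _) hn)
  have hfl : ⌊(2:ℝ) * n⌋₊ = 2 * n := by
    rw [show (2:ℝ) * n = ((2*n : ℕ) : ℝ) by push_cast; ring, Nat.floor_natCast]
  rw [hfl] at h
  calc Q (2*n) = Q (2*n) / Q n * Q n := by field_simp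
  _ ≤ θ * Q n := by nlinarith

include hQpos hγ hQrv in
lemma regvar_halfratio :
    ∃ N : ℕ, 1 ≤ N ∧ ∀ n, N ≤ n → Q (n/2) ≤ ((2:ℝ)^γ + 1) * Q n := by
  have htd := hQrv (1/2) (by norm_num)
  have h12 : ((1/2:ℝ)) ^ (-γ) = (2:ℝ)^γ := by
    rw [one_div, Real.inv_rpow (by norm_num : (0:ℝ) ≤ 2),
      ← Real.rpow_neg (by norm_num : (0:ℝ) ≤ 2), neg_neg]
  have hev : ∀ᶠ n : ℕ in atTop, Q ⌊(1/2:ℝ) * n⌋₊ / Q n < (2:ℝ)^γ + 1 := by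
    apply htd.eventually_lt_const
    rw [h12]; linarith
  obtain ⟨N0, hN0⟩ := hev.exists_forall_of_atTop
  refine ⟨max N0 1, le_max_right _ _, ?_⟩
  intro n hn
  have hn1 : 1 ≤ n := le_trans (le_max_right _ _) hn
  have hQn := hQpos n hn1
  have h := hN0 n (le_trans (le_max_left _ _) hn)
  have hfl : ⌊(1/2:ℝ) * n⌋₊ = n/2 := by
    rw [show (1/2:ℝ) * n = (n:ℝ)/(2:ℕ) by push_cast; ring, Nat.floor_div_natCast, Nat.floor_natCast]
  rw [hfl] at h
  have hpos : (0:ℝ) < (2:ℝ)^γ + 1 := by positivity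
  calc Q (n/2) = Q (n/2) / Q n * Q n := by field_simp
  _ ≤ ((2:ℝ)^γ + 1) * Q n := by nlinarith

include hQpos hγ hQrv in
lemma regvar_tail :
    ∀ ε : ℝ, 0 < ε → ∃ K : ℕ, 1 ≤ K ∧ ∀ M : ℕ, (∑ k ∈ Finset.Icc K M, Q k) ≤ ε := by
  intro ε hε
  obtain ⟨C, hC, Nw, hNw1, hwin⟩ := regvar_window Q hQpos γ hγ hQrv
  obtain ⟨θ, hθ0, hθ1, Nh, hNh1, hhalf⟩ := regvar_halving Q hQpos γ hγ hQrv
  set N0 : ℕ := max Nw Nh with hN0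
  have hN01 : 1 ≤ N0 := le_trans hNw1 (le_max_left _ _)
  have hQN0 := hQpos N0 hN01
  -- dyadic decay
  have hdy : ∀ j : ℕ, Q (2^j * N0) ≤ θ^j * Q N0 := by
    intro j
    induction j with
    | zero => simp
    | succ j ih =>
      have h2j : 1 ≤ 2^j * N0 := Nat.one_le_iff_ne_zero.2 (by positivity)
      have hge : Nh ≤ 2^j * N0 := by
        calc Nh ≤ N0 := le_max_right _ _
        _ ≤ 2^j * N0 := Nat.le_mul_of_pos_left _ (by positivity)
      have := hhalf (2^j * N0) hge
      have h2 : 2^(j+1) * N0 = 2 * (2^j * N0) := by ring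
      rw [h2]
      calc Q (2 * (2^j * N0)) ≤ θ * Q (2^j * N0) := this
      _ ≤ θ * (θ^j * Q N0) := by nlinarith
      _ = θ^(j+1) * Q N0 := by ring
  -- block bound
  have hblock : ∀ j : ℕ, (∑ k ∈ Finset.Ico (2^j * N0) (2^(j+1) * N0), Q k)
      ≤ (C * Q N0 * N0) * (2*θ)^j := by
    intro j
    have hb1 : 1 ≤ 2^j * N0 := Nat.one_le_iff_ne_zero.2 (by positivity)
    have hbw : Nw ≤ 2^j * N0 := by
      calc Nw ≤ N0 := le_max_left _ _
      _ ≤ 2^j * N0 := Nat.le_mul_of_pos_left _ (by positivity)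
    have heach : ∀ k ∈ Finset.Ico (2^j * N0) (2^(j+1) * N0), Q k ≤ C * (θ^j * Q N0) := by
      intro k hk
      rw [Finset.mem_Ico] at hk
      have h3 : k ≤ 3 * (2^j * N0) := by
        have : 2^(j+1) * N0 = 2 * (2^j * N0) := by ring
        omega
      calc Q k ≤ C * Q (2^j * N0) := hwin (2^j * N0) hbw k hk.1 h3
      _ ≤ C * (θ^j * Q N0) := by nlinarith [hdy j]
    calc (∑ k ∈ Finset.Ico (2^j * N0) (2^(j+1) * N0), Q k)
        ≤ (Finset.Ico (2^j * N0) (2^(j+1) * N0)).card * (C * (θ^j * Q N0)) := by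
          apply Finset.sum_le_card_nsmul _ _ _ heach |>.trans
          rw [nsmul_eq_mul]
      _ = (2^j * N0 : ℕ) * (C * (θ^j * Q N0)) := by
          rw [Nat.card_Ico]
          congr 2
          have : 2^(j+1) * N0 = 2 * (2^j * N0) := by ring
          omega
      _ = (C * Q N0 * N0) * (2*θ)^j := by
          push_cast
          rw [mul_pow]
          push_cast
          ring
  -- geometric sum over blocks
  have hgeo : ∀ J L : ℕ, (∑ k ∈ Finset.Ico (2^J * N0) (2^(J+L) * N0), Q k)
      ≤ (C * Q N0 * N0) * (2*θ)^J * (1/(1-2*θ)) := by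
    intro J L
    have hsplit : ∀ L : ℕ, (∑ k ∈ Finset.Ico (2^J * N0) (2^(J+L) * N0), Q k)
        ≤ (C * Q N0 * N0) * ∑ j ∈ Finset.range L, (2*θ)^(J+j) := by
      intro L
      induction L with
      | zero => simp
      | succ L ih =>
        have hle : 2^J * N0 ≤ 2^(J+L) * N0 :=
          Nat.mul_le_mul_right _ (Nat.pow_le_pow_right (by norm_num) (by omega))
        have hle2 : 2^(J+L) * N0 ≤ 2^(J+L+1) * N0 :=
          Nat.mul_le_mul_right _ (Nat.pow_le_pow_right (by norm_num) (by omega))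
        rw [show J+(L+1) = (J+L)+1 by omega,
          ← Finset.sum_Ico_consecutive _ hle hle2, Finset.sum_range_succ, mul_add]
        exact add_le_add ih (by rw [show J+L+1 = (J+L)+1 by omega]; exact hblock (J+L))
    refine le_trans (hsplit L) ?_
    have hCpos : 0 ≤ C * Q N0 * (N0:ℝ) := by positivity
    have hx : (0:ℝ) ≤ 2*θ := by linarith
    have hxL : (0:ℝ) ≤ (2*θ)^L := pow_nonneg hx L
    have hgs : (∑ j ∈ Finset.range L, (2*θ)^(J+j)) ≤ (2*θ)^J * (1/(1-2*θ)) := by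
      have hrw : (∑ j ∈ Finset.range L, (2*θ)^(J+j))
          = (2*θ)^J * ∑ j ∈ Finset.range L, (2*θ)^j := by
        rw [Finset.mul_sum]
        exact Finset.sum_congr rfl fun j _ => pow_add _ _ _
      rw [hrw]
      have hsum : (∑ j ∈ Finset.range L, (2*θ)^j) ≤ 1/(1-2*θ) := by
        have heq : (∑ j ∈ Finset.range L, (2*θ)^j) = (1-(2*θ)^L)/(1-2*θ) := by
          rw [geom_sum_eq (by linarith : (2*θ:ℝ) ≠ 1), ← neg_div_neg_eq]
          ring_nf
        rw [heq, div_le_div_iff₀ (by linarith) (by linarith)]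
        nlinarith
      have hJn : (0:ℝ) ≤ (2*θ)^J := pow_nonneg hx J
      nlinarith
    calc C * Q N0 * (N0:ℝ) * ∑ j ∈ Finset.range L, (2*θ)^(J+j)
        ≤ C * Q N0 * (N0:ℝ) * ((2*θ)^J * (1/(1-2*θ))) :=
          mul_le_mul_of_nonneg_left hgs hCpos
      _ = C * Q N0 * (N0:ℝ) * (2*θ)^J * (1/(1-2*θ)) := by ring
  -- choose J so that the geometric tail is below ε
  have hlim : Tendsto (fun J : ℕ => (C * Q N0 * N0) * (2*θ)^J * (1/(1-2*θ))) atTop (nhds 0) := by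
    have h0 : Tendsto (fun J : ℕ => (2*θ:ℝ)^J) atTop (nhds 0) :=
      tendsto_pow_atTop_nhds_zero_of_lt_one (by linarith) hθ1
    have h1 := (h0.const_mul (C * Q N0 * (N0:ℝ))).mul_const (1/(1-2*θ))
    simpa using h1
  obtain ⟨J, hJ⟩ := (hlim.eventually_lt_const hε).exists
  refine ⟨2^J * N0, Nat.one_le_iff_ne_zero.2 (by positivity), ?_⟩
  intro M
  by_cases hM : M < 2^J * N0
  · rw [Finset.Icc_eq_empty (by omega)]
    simp [le_of_lt hε]
  · push_neg at hM
    have hsub : Finset.Icc (2^J * N0) M ⊆ Finset.Ico (2^J * N0) (2^(J+(M+1)) * N0) := by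
      intro k hk
      rw [Finset.mem_Icc] at hk; rw [Finset.mem_Ico]
      refine ⟨hk.1, lt_of_le_of_lt hk.2 ?_⟩
      calc M < 2^(M+1) := by
            have h1 : M < 2^M := Nat.lt_two_pow_self
            have h2 : (2:ℕ)^M ≤ 2^(M+1) := Nat.pow_le_pow_right (by norm_num) (by omega)
            omega
      _ ≤ 2^(J+(M+1)) := Nat.pow_le_pow_right (by norm_num) (by omega)
      _ ≤ 2^(J+(M+1)) * N0 := Nat.le_mul_of_pos_right _ (by omega)
    have hmono : (∑ k ∈ Finset.Icc (2^J * N0) M, Q k)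
        ≤ ∑ k ∈ Finset.Ico (2^J * N0) (2^(J+(M+1)) * N0), Q k := by
      apply Finset.sum_le_sum_of_subset_of_nonneg hsub
      intro k hk _
      rw [Finset.mem_Ico] at hk
      exact le_of_lt (hQpos k (le_trans (Nat.one_le_iff_ne_zero.2 (by positivity)) hk.1))
    exact le_trans hmono (le_trans (hgeo J (M+1)) (le_of_lt hJ))

include hQpos hγ hQrv in
lemma regvar_conv :
    ∀ ε : ℝ, 0 < ε → ∃ K : ℕ, 1 ≤ K ∧ ∃ N : ℕ, ∀ n, N ≤ n →
      (∑ k ∈ Finset.Ioc K (n - K), Q k * Q (n - k)) ≤ ε * Q n := by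
  intro ε hε
  obtain ⟨C, hC, Nw, hNw1, hwin⟩ := regvar_window Q hQpos γ hγ hQrv
  obtain ⟨Nh, hNh1, hhalf⟩ := regvar_halfratio Q hQpos γ hγ hQrv
  have h2γpos : (0:ℝ) < (2:ℝ)^γ + 1 := by positivity
  obtain ⟨K, hK1, hKtail⟩ := regvar_tail Q hQpos γ hγ hQrv (ε / (2 * (C * ((2:ℝ)^γ + 1)))) (by positivity)
  refine ⟨K, hK1, 2*Nw + 2*K + 2*Nh + 4, ?_⟩
  intro n hn
  set h : ℕ := n / 2 with hh
  have hKh : K ≤ h := by omega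
  have hhnK : h ≤ n - K := by omega
  have hQnpos : 0 < Q n := hQpos n (by omega)
  -- reindex the upper half
  have hre : (∑ k ∈ Finset.Ioc h (n-K), Q k * Q (n - k))
      = (∑ k ∈ Finset.Ico K (n - h), Q k * Q (n - k)) := by
    apply Finset.sum_nbij' (fun k => n - k) (fun k => n - k)
    · intro a ha
      rw [Finset.mem_Ioc] at ha; rw [Finset.mem_Ico]; omega
    · intro b hb
      rw [Finset.mem_Ico] at hb; rw [Finset.mem_Ioc]; omega
    · intro a ha
      rw [Finset.mem_Ioc] at ha; omega
    · intro b hb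
      rw [Finset.mem_Ico] at hb; omega
    · intro a ha
      rw [Finset.mem_Ioc] at ha
      rw [show n - (n - a) = a by omega]
      ring
  have hbound : ∀ k ∈ Finset.Icc K h, Q k * Q (n - k) ≤ Q k * (C * (((2:ℝ)^γ + 1) * Q n)) := by
    intro k hk
    rw [Finset.mem_Icc] at hk
    have hQk : 0 < Q k := hQpos k (by omega)
    have hwk : Q (n - k) ≤ C * Q h := by
      apply hwin h (by omega) (n - k) (by omega) (by omega)
    have hhn : Q h ≤ ((2:ℝ)^γ + 1) * Q n := hhalf n (by omega)
    have hQh : 0 < Q h := hQpos h (by omega)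
    have h1 : Q (n - k) ≤ C * (((2:ℝ)^γ + 1) * Q n) := by
      have := mul_le_mul_of_nonneg_left hhn (le_of_lt hC)
      linarith
    exact mul_le_mul_of_nonneg_left h1 (le_of_lt hQk)
  have hIccbound : (∑ k ∈ Finset.Icc K h, Q k * Q (n - k))
      ≤ (ε / (2 * (C * ((2:ℝ)^γ + 1)))) * (C * (((2:ℝ)^γ + 1) * Q n)) := by
    calc (∑ k ∈ Finset.Icc K h, Q k * Q (n - k))
        ≤ ∑ k ∈ Finset.Icc K h, Q k * (C * (((2:ℝ)^γ + 1) * Q n)) :=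
          Finset.sum_le_sum hbound
      _ = (∑ k ∈ Finset.Icc K h, Q k) * (C * (((2:ℝ)^γ + 1) * Q n)) := by
          rw [Finset.sum_mul]
      _ ≤ (ε / (2 * (C * ((2:ℝ)^γ + 1)))) * (C * (((2:ℝ)^γ + 1) * Q n)) := by
          apply mul_le_mul_of_nonneg_right (hKtail h) (by positivity)
  have hnonneg : ∀ k ∈ Finset.Icc K h, 0 ≤ Q k * Q (n - k) := by
    intro k hk
    rw [Finset.mem_Icc] at hk
    exact le_of_lt (mul_pos (hQpos k (by omega)) (hQpos (n-k) (by omega)))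
  have hsub1 : (∑ k ∈ Finset.Ioc K h, Q k * Q (n - k))
      ≤ ∑ k ∈ Finset.Icc K h, Q k * Q (n - k) := by
    apply Finset.sum_le_sum_of_subset_of_nonneg
    · intro k hk; rw [Finset.mem_Ioc] at hk; rw [Finset.mem_Icc]; omega
    · intro k hk _; exact hnonneg k hk
  have hsub2 : (∑ k ∈ Finset.Ico K (n - h), Q k * Q (n - k))
      ≤ ∑ k ∈ Finset.Icc K h, Q k * Q (n - k) := by
    apply Finset.sum_le_sum_of_subset_of_nonneg
    · intro k hk; rw [Finset.mem_Ico] at hk; rw [Finset.mem_Icc]; omega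
    · intro k hk _; exact hnonneg k hk
  have hsplit : (∑ k ∈ Finset.Ioc K (n-K), Q k * Q (n - k))
      = (∑ k ∈ Finset.Ioc K h, Q k * Q (n - k))
        + (∑ k ∈ Finset.Ioc h (n-K), Q k * Q (n - k)) :=
    (Finset.sum_Ioc_consecutive _ hKh hhnK).symm
  have hfinal : 2 * ((ε / (2 * (C * ((2:ℝ)^γ + 1)))) * (C * (((2:ℝ)^γ + 1) * Q n))) = ε * Q n := by
    field_simp
  calc (∑ k ∈ Finset.Ioc K (n-K), Q k * Q (n - k))
      = (∑ k ∈ Finset.Ioc K h, Q k * Q (n - k))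
        + (∑ k ∈ Finset.Ioc h (n-K), Q k * Q (n - k)) := hsplit
    _ ≤ (∑ k ∈ Finset.Icc K h, Q k * Q (n - k)) + (∑ k ∈ Finset.Icc K h, Q k * Q (n - k)) := by
        rw [hre]; exact add_le_add hsub1 hsub2
    _ ≤ 2 * ((ε / (2 * (C * ((2:ℝ)^γ + 1)))) * (C * (((2:ℝ)^γ + 1) * Q n))) := by
        linarith [hIccbound]
    _ = ε * Q n := hfinal
end


section
variable {d : ℕ} {Ω : Type*} [MeasurableSpace Ω]
  (μ : MeasureTheory.Measure Ω) [MeasureTheory.IsProbabilityMeasure μ]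
  (ξ : ℕ → Ω → (Fin d → ℤ))
  (hmeas : ∀ i, Measurable (ξ i))
  (hindep : ProbabilityTheory.iIndepFun ξ μ)
  (hident : ∀ i, ProbabilityTheory.IdentDistrib (ξ i) (ξ 0) μ μ)
  (S : ℕ → Ω → (Fin d → ℤ))
  (hS : ∀ n ω, S n ω = ∑ i ∈ Finset.range n, ξ i ω)

include hmeas hS in
lemma measurable_S : ∀ n, Measurable (S n) := by
  intro n
  have : S n = fun ω => ∑ i ∈ Finset.range n, ξ i ω := funext fun ω => hS n ω
  rw [this]
  exact Finset.measurable_sum _ (fun i _ => hmeas i)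

-- convolution decomposition for independent discrete random vectors
lemma conv_count {f g : Ω → (Fin d → ℤ)} (hf : Measurable f) (hg : Measurable g)
    (hfg : IndepFun f g μ) (x : Fin d → ℤ) :
    μ {ω | f ω + g ω = x} = ∑' y : (Fin d → ℤ), μ (f ⁻¹' {y}) * μ (g ⁻¹' {x - y}) := by
  have hdecomp : {ω | f ω + g ω = x} = ⋃ y : (Fin d → ℤ), (f ⁻¹' {y} ∩ g ⁻¹' {x - y}) := by
    ext ω
    simp only [Set.mem_setOf_eq, Set.mem_iUnion, Set.mem_inter_iff, Set.mem_preimage,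
      Set.mem_singleton_iff]
    constructor
    · intro h; exact ⟨f ω, rfl, by rw [← h]; abel⟩
    · rintro ⟨y, hy, hz⟩; rw [hy, hz]; abel
  rw [hdecomp, measure_iUnion]
  · congr 1
    ext y
    exact hfg.measure_inter_preimage_eq_mul {y} {x - y}
      ((Set.to_countable _).measurableSet) ((Set.to_countable _).measurableSet)
  · intro y z hyz
    simp only [Set.disjoint_left]
    intro ω hω hω'
    have h1 : f ω = y := hω.1
    have h2 : f ω = z := hω'.1
    exact hyz (h1 ▸ h2)
  · intro y
    exact (hf ((Set.to_countable _).measurableSet)).inter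
      (hg ((Set.to_countable _).measurableSet))

include hmeas hindep hident hS in
lemma sum_shift_law : ∀ m k x, μ {ω | (∑ i ∈ Finset.range m, ξ (k+i) ω) = x}
    = μ {ω | S m ω = x} := by
  intro m
  induction m with
  | zero =>
    intro k x
    congr 1
    ext ω
    simp [hS]
  | succ m ih =>
    intro k x
    have hfunL : (fun ω => ∑ i ∈ Finset.range m, ξ (k+i) ω)
        = ∑ j ∈ Finset.Ico k (k+m), ξ j := by
      funext ω
      rw [Finset.sum_apply, Finset.sum_Ico_eq_sum_range]
      simp
    have hmL : Measurable (fun ω => ∑ i ∈ Finset.range m, ξ (k+i) ω) :=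
      Finset.measurable_sum _ (fun i _ => hmeas _)
    have hindL : IndepFun (fun ω => ∑ i ∈ Finset.range m, ξ (k+i) ω) (ξ (k+m)) μ := by
      have h := hindep.indepFun_finsetSum_of_notMem hmeas
        (s := Finset.Ico k (k+m)) (i := k+m) (by simp)
      rwa [← hfunL] at h
    have hL : μ {ω | (∑ i ∈ Finset.range (m+1), ξ (k+i) ω) = x}
        = ∑' y : (Fin d → ℤ), μ ((fun ω => ∑ i ∈ Finset.range m, ξ (k+i) ω) ⁻¹' {y})
            * μ ((ξ (k+m)) ⁻¹' {x - y}) := by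
      have hset : {ω | (∑ i ∈ Finset.range (m+1), ξ (k+i) ω) = x}
          = {ω | (fun ω => ∑ i ∈ Finset.range m, ξ (k+i) ω) ω + ξ (k+m) ω = x} := by
        ext ω; simp [Finset.sum_range_succ]
      rw [hset]
      exact conv_count μ hmL (hmeas _) hindL x
    have hSm : Measurable (S m) := measurable_S ξ hmeas S hS m
    have hSfun : S m = ∑ j ∈ Finset.range m, ξ j := by
      funext ω
      rw [hS, Finset.sum_apply]
    have hindR : IndepFun (S m) (ξ m) μ := by
      have h := hindep.indepFun_finsetSum_of_notMem hmeas
        (s := Finset.range m) (i := m) (by simp)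
      rwa [← hSfun] at h
    have hR : μ {ω | S (m+1) ω = x}
        = ∑' y : (Fin d → ℤ), μ ((S m) ⁻¹' {y}) * μ ((ξ m) ⁻¹' {x - y}) := by
      have hset : {ω | S (m+1) ω = x} = {ω | S m ω + ξ m ω = x} := by
        ext ω; simp [hS, Finset.sum_range_succ]
      rw [hset]
      exact conv_count μ hSm (hmeas m) hindR x
    rw [hL, hR]
    congr 1
    ext y
    have h1 : μ ((fun ω => ∑ i ∈ Finset.range m, ξ (k+i) ω) ⁻¹' {y}) = μ ((S m) ⁻¹' {y}) :=
      ih k y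
    have h2 : μ (ξ (k+m) ⁻¹' {x-y}) = μ (ξ m ⁻¹' {x-y}) := by
      rw [(hident (k+m)).measure_mem_eq ((Set.to_countable _).measurableSet),
        ← (hident m).measure_mem_eq ((Set.to_countable _).measurableSet)]
    rw [h1, h2]

include hmeas hindep hident hS in
lemma tau_factor (n k : ℕ) (hk1 : 1 ≤ k) (hkn : k ≤ n) (x : Fin d → ℤ) :
    μ ({ω | S k ω = 0 ∧ ∀ j, 0 < j → j < k → S j ω ≠ 0} ∩ {ω | S n ω = x})
      = μ {ω | S k ω = 0 ∧ ∀ j, 0 < j → j < k → S j ω ≠ 0} * μ {ω | S (n-k) ω = x} := by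
  classical
  set T : Ω → (Fin d → ℤ) := fun ω => ∑ i ∈ Finset.Ico k n, ξ i ω with hT
  -- step A
  have hstepA : {ω | S k ω = 0 ∧ ∀ j, 0 < j → j < k → S j ω ≠ 0} ∩ {ω | S n ω = x}
      = {ω | S k ω = 0 ∧ ∀ j, 0 < j → j < k → S j ω ≠ 0} ∩ (T ⁻¹' {x}) := by
    ext ω
    simp only [Set.mem_inter_iff, Set.mem_setOf_eq, Set.mem_preimage, Set.mem_singleton_iff]
    have hsum : S k ω + T ω = S n ω := by
      rw [hS k ω, hS n ω, hT]
      exact Finset.sum_range_add_sum_Ico _ hkn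
    constructor
    · rintro ⟨⟨h0, hj⟩, hx⟩
      refine ⟨⟨h0, hj⟩, ?_⟩
      rw [h0, zero_add] at hsum
      rw [hsum, hx]
    · rintro ⟨⟨h0, hj⟩, hx⟩
      refine ⟨⟨h0, hj⟩, ?_⟩
      rw [h0, zero_add] at hsum
      rw [← hsum, hx]
  -- step B : independence
  set W : Ω → (↥(Finset.range k) → (Fin d → ℤ)) := fun ω i => ξ (i : ℕ) ω with hW
  set W₂ : Ω → (↥(Finset.Ico k n) → (Fin d → ℤ)) := fun ω i => ξ (i : ℕ) ω with hW₂
  have hWT : IndepFun W W₂ μ := by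
    apply hindep.indepFun_finset (Finset.range k) (Finset.Ico k n) _ hmeas
    rw [Finset.disjoint_left]
    intro a ha ha'
    rw [Finset.mem_range] at ha
    rw [Finset.mem_Ico] at ha'
    omega
  set ψ : (↥(Finset.range k) → (Fin d → ℤ)) → (Fin (k+1) → (Fin d → ℤ)) :=
    fun v j => ∑ i ∈ (Finset.range k).attach, if (i : ℕ) < (j : ℕ) then v i else 0 with hψ
  set φ : (↥(Finset.Ico k n) → (Fin d → ℤ)) → (Fin d → ℤ) := fun v => ∑ i ∈ (Finset.Ico k n).attach, v i with hφ
  set U : Ω → (Fin (k+1) → (Fin d → ℤ)) := fun ω j => S (j : ℕ) ω with hU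
  have hUW : U = ψ ∘ W := by
    funext ω j
    have hjk : (j : ℕ) ≤ k := by omega
    simp only [hU, hψ, hW, Function.comp_apply]
    rw [Finset.sum_attach (Finset.range k) (fun i => if i < (j:ℕ) then ξ i ω else 0)]
    rw [← Finset.sum_filter]
    have : (Finset.range k).filter (fun i => i < (j:ℕ)) = Finset.range (j:ℕ) := by
      ext a
      simp only [Finset.mem_filter, Finset.mem_range]
      omega
    rw [this, hS]
  have hTW : T = φ ∘ W₂ := by
    funext ω
    simp only [hT, hφ, hW₂, Function.comp_apply]
    rw [Finset.sum_attach (Finset.Ico k n) (fun i => ξ i ω)]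
  have hUT : IndepFun U T μ := by
    rw [hUW, hTW]
    exact hWT.comp (measurable_of_countable ψ) (measurable_of_countable φ)
  -- step C
  set Bu : Set (Fin (k+1) → (Fin d → ℤ)) := {v | v (Fin.last k) = 0 ∧
      ∀ j : Fin (k+1), 0 < (j : ℕ) → (j : ℕ) < k → v j ≠ 0} with hBu
  have hstepC : {ω | S k ω = 0 ∧ ∀ j, 0 < j → j < k → S j ω ≠ 0} = U ⁻¹' Bu := by
    ext ω
    simp only [Set.mem_setOf_eq, Set.mem_preimage, hBu, hU, Fin.val_last]
    constructor
    · rintro ⟨h0, hj⟩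
      exact ⟨h0, fun j hj1 hj2 => hj (j : ℕ) hj1 hj2⟩
    · rintro ⟨h0, hj⟩
      refine ⟨h0, fun j hj1 hj2 => ?_⟩
      have := hj ⟨j, by omega⟩ hj1 hj2
      simpa using this
  rw [hstepA, hstepC]
  rw [hUT.measure_inter_preimage_eq_mul Bu {x} ((Set.to_countable _).measurableSet)
    ((Set.to_countable _).measurableSet)]
  congr 1
  -- step E
  have hTre : T ⁻¹' {x} = {ω | (∑ i ∈ Finset.range (n-k), ξ (k+i) ω) = x} := by
    ext ω
    simp only [Set.mem_preimage, Set.mem_singleton_iff, Set.mem_setOf_eq, hT]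
    rw [Finset.sum_Ico_eq_sum_range]
  rw [hTre]
  exact sum_shift_law μ ξ hmeas hindep hident S hS (n-k) k x

include hmeas hS in
lemma meas_Sset (k : ℕ) (x : Fin d → ℤ) : MeasurableSet {ω | S k ω = x} :=
  (measurable_S ξ hmeas S hS k) ((Set.to_countable {x}).measurableSet)

include hmeas hS in
lemma meas_tau (k : ℕ) :
    MeasurableSet {ω | S k ω = 0 ∧ ∀ j, 0 < j → j < k → S j ω ≠ 0} := by
  have hrw : {ω | S k ω = 0 ∧ ∀ j, 0 < j → j < k → S j ω ≠ 0}
      = {ω | S k ω = 0} ∩ ⋂ (j : ℕ), ⋂ (_ : 0 < j), ⋂ (_ : j < k), {ω | S j ω = 0}ᶜ := by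
    ext ω
    simp only [Set.mem_inter_iff, Set.mem_setOf_eq, Set.mem_iInter, Set.mem_compl_iff]
  rw [hrw]
  exact (meas_Sset ξ hmeas S hS k 0).inter
    (MeasurableSet.iInter fun j => MeasurableSet.iInter fun _ =>
      MeasurableSet.iInter fun _ => (meas_Sset ξ hmeas S hS j 0).compl)

include hmeas hS in
lemma meas_G (n : ℕ) :
    MeasurableSet {ω | ∀ k, 0 < k → k ≤ n → S k ω ≠ 0} := by
  have hrw : {ω | ∀ k, 0 < k → k ≤ n → S k ω ≠ 0}
      = ⋂ (k : ℕ), ⋂ (_ : 0 < k), ⋂ (_ : k ≤ n), {ω | S k ω = 0}ᶜ := by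
    ext ω
    simp only [Set.mem_setOf_eq, Set.mem_iInter, Set.mem_compl_iff]
  rw [hrw]
  exact MeasurableSet.iInter fun k => MeasurableSet.iInter fun _ =>
    MeasurableSet.iInter fun _ => (meas_Sset ξ hmeas S hS k 0).compl

include S in
lemma first_zero {ω : Ω} (h : ∃ j, 0 < j ∧ S j ω = 0) :
    ∃ k, 0 < k ∧ S k ω = 0 ∧ (∀ j, 0 < j → j < k → S j ω ≠ 0) ∧
      (∀ j, 0 < j → S j ω = 0 → k ≤ j) := by
  classical
  have hP : ∃ j, 0 < j ∧ S j ω = 0 := h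
  refine ⟨Nat.find hP, (Nat.find_spec hP).1, (Nat.find_spec hP).2, ?_, ?_⟩
  · intro j hj1 hj2 hj0
    exact (Nat.find_min hP hj2) ⟨hj1, hj0⟩
  · intro j hj1 hj0
    exact Nat.find_min' hP ⟨hj1, hj0⟩

include hmeas hS in
lemma partition_eq (n : ℕ) (x : Fin d → ℤ) :
    μ {ω | S n ω = x}
      = μ ({ω | S n ω = x} ∩ {ω | ∀ k, 0 < k → k ≤ n → S k ω ≠ 0})
        + ∑ k ∈ Finset.Icc 1 n,
            μ ({ω | S k ω = 0 ∧ ∀ j, 0 < j → j < k → S j ω ≠ 0} ∩ {ω | S n ω = x}) := by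
  classical
  set A := {ω | S n ω = x} with hA
  set G := {ω | ∀ k, 0 < k → k ≤ n → S k ω ≠ 0} with hG
  set Tev : ℕ → Set Ω := fun k =>
    {ω | S k ω = 0 ∧ ∀ j, 0 < j → j < k → S j ω ≠ 0} ∩ A with hTev
  have hmeasTev : ∀ k, MeasurableSet (Tev k) :=
    fun k => (meas_tau ξ hmeas S hS k).inter (meas_Sset ξ hmeas S hS n x)
  have hsetid : A = (A ∩ G) ∪ ⋃ k ∈ Finset.Icc 1 n, Tev k := by
    ext ω
    simp only [Set.mem_union, Set.mem_inter_iff, Set.mem_iUnion, Finset.mem_Icc, hTev,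
      Set.mem_setOf_eq, hG, hA]
    constructor
    · intro hx
      by_cases hg : ∀ k, 0 < k → k ≤ n → S k ω ≠ 0
      · exact Or.inl ⟨hx, hg⟩
      · push_neg at hg
        obtain ⟨j, hj1, hj2, hj0⟩ := hg
        obtain ⟨k, hk1, hk0, hkmin, hkle⟩ := first_zero S ⟨j, hj1, hj0⟩
        exact Or.inr ⟨k, ⟨hk1, le_trans (hkle j hj1 hj0) hj2⟩, ⟨hk0, hkmin⟩, hx⟩
    · rintro (⟨hx, _⟩ | ⟨k, _, _, hx⟩) <;> exact hx
  have hdisj1 : Disjoint (A ∩ G) (⋃ k ∈ Finset.Icc 1 n, Tev k) := by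
    rw [Set.disjoint_left]
    rintro ω ⟨_, hg⟩ hu
    simp only [Set.mem_iUnion, Finset.mem_Icc] at hu
    obtain ⟨k, ⟨hk1, hkn⟩, hk⟩ := hu
    exact hg k hk1 hkn hk.1.1
  have hdisj2 : (↑(Finset.Icc 1 n) : Set ℕ).PairwiseDisjoint Tev := by
    intro a ha b hb hab
    rw [Function.onFun, Set.disjoint_left]
    intro ω hωa hωb
    rcases lt_or_gt_of_ne hab with h | h
    · exact hωb.1.2 a (by simp only [Finset.coe_Icc, Set.mem_Icc] at ha; omega) h hωa.1.1
    · exact hωa.1.2 b (by simp only [Finset.coe_Icc, Set.mem_Icc] at hb; omega) h hωb.1.1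
  calc μ A = μ ((A ∩ G) ∪ ⋃ k ∈ Finset.Icc 1 n, Tev k) := by rw [← hsetid]
    _ = μ (A ∩ G) + μ (⋃ k ∈ Finset.Icc 1 n, Tev k) :=
        measure_union hdisj1 (Finset.measurableSet_biUnion _ fun k _ => hmeasTev k)
    _ = μ (A ∩ G) + ∑ k ∈ Finset.Icc 1 n, μ (Tev k) := by
        rw [measure_biUnion_finset hdisj2 fun k _ => hmeasTev k]

include hmeas hS in
lemma tau_tsum_eq :
    μ {ω | ∃ k, 1 ≤ k ∧ S k ω = 0}
      = ∑' i : ℕ, μ {ω | S (i+1) ω = 0 ∧ ∀ j, 0 < j → j < i+1 → S j ω ≠ 0} := by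
  classical
  have hsetid : {ω | ∃ k, 1 ≤ k ∧ S k ω = 0}
      = ⋃ i : ℕ, {ω | S (i+1) ω = 0 ∧ ∀ j, 0 < j → j < i+1 → S j ω ≠ 0} := by
    ext ω
    simp only [Set.mem_setOf_eq, Set.mem_iUnion]
    constructor
    · rintro ⟨k, hk1, hk0⟩
      obtain ⟨k', hk1', hk0', hkmin, _⟩ := first_zero S ⟨k, hk1, hk0⟩
      exact ⟨k' - 1, by rw [show k' - 1 + 1 = k' by omega]; exact ⟨hk0', hkmin⟩⟩
    · rintro ⟨i, hi0, _⟩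
      exact ⟨i+1, by omega, hi0⟩
  rw [hsetid, measure_iUnion]
  · intro a b hab
    rw [Function.onFun, Set.disjoint_left]
    intro ω hωa hωb
    rcases lt_or_gt_of_ne hab with h | h
    · exact hωb.2 (a+1) (by omega) (by omega) hωa.1
    · exact hωa.2 (b+1) (by omega) (by omega) hωb.1
  · exact fun i => meas_tau ξ hmeas S hS (i+1)

include hmeas hS in
lemma norm_tail (j : ℕ) :
    Tendsto (fun R : ℕ => μ {ω | (R:ℝ) < ‖S j ω‖}) atTop (nhds 0) := by
  have hmeasset : ∀ R : ℕ, MeasurableSet {ω | (R:ℝ) < ‖S j ω‖} := by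
    intro R
    exact (measurable_S ξ hmeas S hS j) ((Set.to_countable {v : Fin d → ℤ | (R:ℝ) < ‖v‖}).measurableSet)
  have hanti : Antitone (fun R : ℕ => {ω | (R:ℝ) < ‖S j ω‖}) := by
    intro a b hab ω hω
    simp only [Set.mem_setOf_eq] at hω ⊢
    have : (a:ℝ) ≤ (b:ℝ) := by exact_mod_cast hab
    linarith
  have hempty : (⋂ R : ℕ, {ω | (R:ℝ) < ‖S j ω‖}) = ∅ := by
    ext ω
    simp only [Set.mem_iInter, Set.mem_setOf_eq, Set.mem_empty_iff_false, iff_false, not_forall,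
      not_lt]
    exact exists_nat_ge ‖S j ω‖
  have htm := tendsto_measure_iInter_atTop (fun R => (hmeasset R).nullMeasurableSet) hanti
    ⟨0, measure_ne_top μ _⟩
  rw [hempty, measure_empty] at htm
  exact htm

include hmeas hS in
lemma norm_small (K : ℕ) (ε : ℝ) (hε : 0 < ε) (r : ℕ → ℝ) (hr : Tendsto r atTop atTop) :
    ∃ N, ∀ n, N ≤ n → ∀ j, j < K → (μ {ω | r n < ‖S j ω‖}).toReal ≤ ε := by
  induction K with
  | zero => exact ⟨0, fun n _ j hj => absurd hj (by omega)⟩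
  | succ K ih =>
    obtain ⟨N1, hN1⟩ := ih
    have h0 := norm_tail μ ξ hmeas S hS K
    have hev : ∀ᶠ R : ℕ in atTop, μ {ω | (R:ℝ) < ‖S K ω‖} < ENNReal.ofReal ε :=
      h0.eventually_lt_const (by simp [ENNReal.ofReal_pos, hε])
    obtain ⟨R0, hR0⟩ := hev.exists_forall_of_atTop
    obtain ⟨N2, hN2⟩ := (hr.eventually_ge_atTop (R0:ℝ)).exists_forall_of_atTop
    refine ⟨max N1 N2, fun n hn j hj => ?_⟩
    rcases Nat.lt_succ_iff_lt_or_eq.1 hj with h | h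
    · exact hN1 n (le_trans (le_max_left _ _) hn) j h
    · subst h
      have hsub : {ω | r n < ‖S j ω‖} ⊆ {ω | (R0:ℝ) < ‖S j ω‖} := by
        intro ω hω
        simp only [Set.mem_setOf_eq] at hω ⊢
        have := hN2 n (le_trans (le_max_right _ _) hn)
        linarith
      calc (μ {ω | r n < ‖S j ω‖}).toReal
          ≤ (ENNReal.ofReal ε).toReal := by
            apply ENNReal.toReal_mono ENNReal.ofReal_ne_top
            exact le_of_lt (lt_of_le_of_lt (measure_mono hsub) (hR0 R0 le_rfl))
        _ = ε := ENNReal.toReal_ofReal (le_of_lt hε)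

lemma smooth_max (Q : ℕ → ℝ)
    (hsmooth : ∀ k : ℕ, ∀ ε > (0 : ℝ), ∃ N, ∀ n ≥ N, ∀ x : Fin d → ℤ,
      |(μ {ω | S (n - k) ω = x}).toReal - (μ {ω | S n ω = x}).toReal| ≤ ε * Q n) :
    ∀ K : ℕ, ∀ ε > (0:ℝ), ∃ N, ∀ n, N ≤ n → ∀ k, k < K → ∀ x : Fin d → ℤ,
      |(μ {ω | S (n - k) ω = x}).toReal - (μ {ω | S n ω = x}).toReal| ≤ ε * Q n := by
  intro K
  induction K with
  | zero => exact fun ε hε => ⟨0, fun n _ k hk => absurd hk (by omega)⟩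
  | succ K ih =>
    intro ε hε
    obtain ⟨N1, h1⟩ := ih ε hε
    obtain ⟨N2, h2⟩ := hsmooth K ε hε
    refine ⟨max N1 N2, fun n hn k hk x => ?_⟩
    rcases Nat.lt_succ_iff_lt_or_eq.1 hk with h | h
    · exact h1 n (le_trans (le_max_left _ _) hn) k h x
    · subst h
      exact h2 n (le_trans (le_max_right _ _) hn) x
end


set_option maxHeartbeats 2000000 in
/-- Lemma 1 of the paper: under a uniform local bound
`P{S_n = x} ≤ Q_n` with `Q` regularly varying of index `-γ`, `γ > 1`, and a
uniform smoothness condition, one has, uniformly in `‖x‖ > r_n`,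
`P{S_n = x, τ > n} = (1-p) P{S_n = x} + o(Q_n)`. -/
theorem stmt10
    {d : ℕ} {Ω : Type*} [MeasurableSpace Ω]
    (μ : MeasureTheory.Measure Ω) [MeasureTheory.IsProbabilityMeasure μ]
    (ξ : ℕ → Ω → (Fin d → ℤ))
    (hmeas : ∀ i, Measurable (ξ i))
    (hindep : ProbabilityTheory.iIndepFun ξ μ)
    (hident : ∀ i, ProbabilityTheory.IdentDistrib (ξ i) (ξ 0) μ μ)
    (S : ℕ → Ω → (Fin d → ℤ))
    (hS : ∀ n ω, S n ω = ∑ i ∈ Finset.range n, ξ i ω)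
    (Q : ℕ → ℝ) (hQpos : ∀ n, 1 ≤ n → 0 < Q n)
    (γ : ℝ) (hγ : 1 < γ) (hQrv : RegVar Q (-γ))
    (hbound : ∀ n, 1 ≤ n → ∀ x : Fin d → ℤ, (μ {ω | S n ω = x}).toReal ≤ Q n)
    (hsmooth : ∀ k : ℕ, ∀ ε > (0 : ℝ), ∃ N, ∀ n ≥ N, ∀ x : Fin d → ℤ,
      |(μ {ω | S (n - k) ω = x}).toReal - (μ {ω | S n ω = x}).toReal| ≤ ε * Q n)
    (r : ℕ → ℝ) (hr : Filter.Tendsto r Filter.atTop Filter.atTop)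
    (p : ℝ) (hp : p = (μ {ω | ∃ k, 1 ≤ k ∧ S k ω = 0}).toReal) :
    ∀ ε > (0 : ℝ), ∃ N, ∀ n ≥ N, ∀ x : Fin d → ℤ, r n < ‖x‖ →
      |(μ {ω | S n ω = x ∧ ∀ k, 0 < k → k ≤ n → S k ω ≠ 0}).toReal -
        (1 - p) * (μ {ω | S n ω = x}).toReal| ≤ ε * Q n := by
  intro ε hε
  classical
  have hPnn : ∀ (m : ℕ) (x : Fin d → ℤ), (0:ℝ) ≤ (μ {ω | S m ω = x}).toReal :=
    fun _ _ => ENNReal.toReal_nonneg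
  set t : ℕ → ℝ :=
    fun k => (μ {ω | S k ω = 0 ∧ ∀ j, 0 < j → j < k → S j ω ≠ 0}).toReal with ht
  set F : ℕ → ℝ := fun K => ∑ i ∈ Finset.range K, t (i+1) with hFdef
  have htn : ∀ k, 0 ≤ t k := fun k => ENNReal.toReal_nonneg
  have htsum_ne :
      (∑' i : ℕ, μ {ω | S (i+1) ω = 0 ∧ ∀ j, 0 < j → j < i+1 → S j ω ≠ 0}) ≠ ⊤ := by
    rw [← tau_tsum_eq μ ξ hmeas S hS]
    exact measure_ne_top μ _
  have hsummable : Summable (fun i : ℕ => t (i+1)) := ENNReal.summable_toReal htsum_ne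
  have hp_eq : p = ∑' i : ℕ, t (i+1) := by
    rw [hp, tau_tsum_eq μ ξ hmeas S hS, ENNReal.tsum_toReal_eq (fun i => measure_ne_top μ _)]
  have hFtend : Tendsto F atTop (nhds p) := by
    rw [hp_eq]
    exact hsummable.hasSum.tendsto_sum_nat
  have hFle : ∀ K, F K ≤ p := fun K => by
    rw [hp_eq]
    exact Summable.sum_le_tsum (Finset.range K) (fun i _ => htn (i+1)) hsummable
  have hFmono : Monotone F := fun a b hab =>
    Finset.sum_le_sum_of_subset_of_nonneg
      (fun i hi => Finset.mem_range.2 (lt_of_lt_of_le (Finset.mem_range.1 hi) hab))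
      (fun i _ _ => htn _)
  have hple : p ≤ 1 := by
    rw [hp]
    calc (μ {ω | ∃ k, 1 ≤ k ∧ S k ω = 0}).toReal
        ≤ (1 : ℝ≥0∞).toReal := ENNReal.toReal_mono (by norm_num) prob_le_one
      _ = 1 := by simp
  have hIoc0 : ∀ m : ℕ, (∑ k ∈ Finset.Ioc 0 m, t k) = F m := by
    intro m
    rw [show Finset.Ioc 0 m = Finset.Ico 1 (m+1) from by
      ext a; simp only [Finset.mem_Ioc, Finset.mem_Ico]; omega]
    rw [Finset.sum_Ico_eq_sum_range]
    simp only [Nat.add_sub_cancel, hFdef]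
    exact Finset.sum_congr rfl fun i _ => by rw [add_comm]
  have hIocF : ∀ a b : ℕ, a ≤ b → (∑ k ∈ Finset.Ioc a b, t k) = F b - F a := by
    intro a b hab
    have h := Finset.sum_Ioc_consecutive t (Nat.zero_le a) hab
    rw [hIoc0 a, hIoc0 b] at h
    linarith
  have ht_le_Q : ∀ k, 1 ≤ k → t k ≤ Q k := by
    intro k hk
    calc t k ≤ (μ {ω | S k ω = 0}).toReal :=
          ENNReal.toReal_mono (measure_ne_top μ _) (measure_mono (fun ω h => h.1))
      _ ≤ Q k := hbound k hk 0
  -- choose constants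
  set ε₀ : ℝ := min (ε/8) 1 with hε₀def
  have hε₀ : 0 < ε₀ := lt_min (by linarith) one_pos
  have hε₀ε : ε₀ ≤ ε/8 := min_le_left _ _
  have hε₀1 : ε₀ ≤ 1 := min_le_right _ _
  have hdiff : Tendsto (fun M => p - F M) atTop (nhds 0) := by
    have h := Filter.Tendsto.sub (tendsto_const_nhds (x := p) (f := (atTop : Filter ℕ))) hFtend
    simpa using h
  obtain ⟨K₁, hK₁⟩ := (hdiff.eventually_lt_const hε₀).exists_forall_of_atTop
  obtain ⟨Kc, hKc1, Nc, hNc⟩ := regvar_conv Q hQpos γ hγ hQrv ε₀ hε₀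
  set K : ℕ := max K₁ Kc with hKdef
  obtain ⟨Ns, hNs⟩ := smooth_max μ S Q hsmooth (K+1) ε₀ hε₀
  obtain ⟨Nr, hNr⟩ := norm_small μ ξ hmeas S hS K (ε₀/(K+1)) (by positivity) r hr
  refine ⟨max (max Nc Ns) (max Nr (2*K+2)), ?_⟩
  intro n hn x hx
  have hnNc : Nc ≤ n := le_trans (le_trans (le_max_left _ _) (le_max_left _ _)) hn
  have hnNs : Ns ≤ n := le_trans (le_trans (le_max_right _ _) (le_max_left _ _)) hn
  have hnNr : Nr ≤ n := le_trans (le_trans (le_max_left _ _) (le_max_right _ _)) hn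
  have hn2K : 2*K+2 ≤ n := le_trans (le_trans (le_max_right _ _) (le_max_right _ _)) hn
  have hn1 : 1 ≤ n := by omega
  have hQn : 0 < Q n := hQpos n hn1
  have hKK₁ : K₁ ≤ K := le_max_left _ _
  have hKKc : Kc ≤ K := le_max_right _ _
  have hK1 : 1 ≤ K := le_trans hKc1 hKKc
  set b : ℝ := (μ {ω | S n ω = x}).toReal with hb
  set Pk : ℕ → ℝ := fun k => (μ {ω | S (n-k) ω = x}).toReal with hPk
  -- the basic identity
  have hFactA : b = (μ ({ω | S n ω = x} ∩ {ω | ∀ k, 0 < k → k ≤ n → S k ω ≠ 0})).toReal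
      + ∑ k ∈ Finset.Icc 1 n, t k * Pk k := by
    have h1 := partition_eq μ ξ hmeas S hS n x
    have h2 : ∀ k ∈ Finset.Icc 1 n,
        μ ({ω | S k ω = 0 ∧ ∀ j, 0 < j → j < k → S j ω ≠ 0} ∩ {ω | S n ω = x})
          = μ {ω | S k ω = 0 ∧ ∀ j, 0 < j → j < k → S j ω ≠ 0} * μ {ω | S (n-k) ω = x} := by
      intro k hk
      rw [Finset.mem_Icc] at hk
      exact tau_factor μ ξ hmeas hindep hident S hS n k hk.1 hk.2 x
    rw [Finset.sum_congr rfl h2] at h1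
    have hfin2 : (∑ k ∈ Finset.Icc 1 n,
        μ {ω | S k ω = 0 ∧ ∀ j, 0 < j → j < k → S j ω ≠ 0} * μ {ω | S (n-k) ω = x}) ≠ ⊤ := by
      apply (ENNReal.sum_lt_top.2 ?_).ne
      intro k _
      exact ENNReal.mul_lt_top (measure_lt_top μ _) (measure_lt_top μ _)
    rw [hb, h1, ENNReal.toReal_add (measure_ne_top μ _) hfin2,
      ENNReal.toReal_sum (fun k _ => ENNReal.mul_ne_top (measure_ne_top μ _) (measure_ne_top μ _))]
    congr 1
    exact Finset.sum_congr rfl fun k _ => ENNReal.toReal_mul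
  set a : ℝ := (μ ({ω | S n ω = x} ∩ {ω | ∀ k, 0 < k → k ≤ n → S k ω ≠ 0})).toReal with ha
  have hgoalset : {ω | S n ω = x ∧ ∀ k, 0 < k → k ≤ n → S k ω ≠ 0}
      = {ω | S n ω = x} ∩ {ω | ∀ k, 0 < k → k ≤ n → S k ω ≠ 0} := rfl
  rw [hgoalset]
  show |a - (1-p) * b| ≤ ε * Q n
  have hIccIoc : Finset.Icc 1 n = Finset.Ioc 0 n := by
    ext a; simp only [Finset.mem_Icc, Finset.mem_Ioc]; omega
  rw [hIccIoc] at hFactA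
  -- key rearrangement
  have hSb : ∑ k ∈ Finset.Ioc 0 n, t k * (b - Pk k)
      = F n * b - ∑ k ∈ Finset.Ioc 0 n, t k * Pk k := by
    rw [Finset.sum_congr rfl (fun k _ => mul_sub (t k) b (Pk k)), Finset.sum_sub_distrib,
      ← Finset.sum_mul, hIoc0 n]
  have hkey : a - (1-p) * b
      = (p - F n) * b + ∑ k ∈ Finset.Ioc 0 n, t k * (b - Pk k) := by
    rw [hSb]
    have : a = b - ∑ k ∈ Finset.Ioc 0 n, t k * Pk k := by linarith [hFactA]
    rw [this]; ring
  have habs : |a - (1-p)*b| ≤ (p - F n) * b + ∑ k ∈ Finset.Ioc 0 n, t k * |b - Pk k| := by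
    rw [hkey]
    refine le_trans (abs_add_le _ _) (add_le_add ?_ ?_)
    · rw [abs_mul, abs_of_nonneg (by linarith [hFle n] : (0:ℝ) ≤ p - F n),
        abs_of_nonneg (hPnn n x)]
    · refine le_trans (Finset.abs_sum_le_sum_abs _ _) (le_of_eq ?_)
      exact Finset.sum_congr rfl fun k _ => by rw [abs_mul, abs_of_nonneg (htn k)]
  -- split the sum in three ranges
  set f : ℕ → ℝ := fun k => t k * |b - Pk k| with hf
  have hsplit1 : (∑ k ∈ Finset.Ioc 0 K, f k) + (∑ k ∈ Finset.Ioc K n, f k)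
      = ∑ k ∈ Finset.Ioc 0 n, f k :=
    Finset.sum_Ioc_consecutive f (Nat.zero_le K) (by omega)
  have hsplit2 : (∑ k ∈ Finset.Ioc K (n-K), f k) + (∑ k ∈ Finset.Ioc (n-K) n, f k)
      = ∑ k ∈ Finset.Ioc K n, f k :=
    Finset.sum_Ioc_consecutive f (by omega) (by omega)
  -- part 0
  have hpart0 : (p - F n) * b ≤ ε₀ * Q n := by
    have h1 : p - F n < ε₀ := by
      have := hK₁ n (by omega)
      simpa using this
    have h2 : b ≤ Q n := hbound n hn1 x
    have h3 : 0 ≤ p - F n := by linarith [hFle n]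
    nlinarith [hPnn n x]
  -- part 1 : small k
  have hpart1 : (∑ k ∈ Finset.Ioc 0 K, f k) ≤ ε₀ * Q n := by
    have hterm : ∀ k ∈ Finset.Ioc 0 K, f k ≤ t k * (ε₀ * Q n) := by
      intro k hk
      rw [Finset.mem_Ioc] at hk
      have hsm := hNs n hnNs k (by omega) x
      rw [abs_sub_comm] at hsm
      exact mul_le_mul_of_nonneg_left hsm (htn k)
    calc (∑ k ∈ Finset.Ioc 0 K, f k) ≤ ∑ k ∈ Finset.Ioc 0 K, t k * (ε₀ * Q n) :=
          Finset.sum_le_sum hterm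
      _ = F K * (ε₀ * Q n) := by rw [← Finset.sum_mul, hIoc0 K]
      _ ≤ 1 * (ε₀ * Q n) := by
          apply mul_le_mul_of_nonneg_right (le_trans (hFle K) hple) (by positivity)
      _ = ε₀ * Q n := one_mul _
  -- part 2 : middle range
  have habs_le : ∀ k, |b - Pk k| ≤ b + Pk k := by
    intro k
    have h1 : (0:ℝ) ≤ b := hPnn n x
    have h2 : (0:ℝ) ≤ Pk k := hPnn (n-k) x
    rw [abs_le]
    constructor <;> linarith
  have hpart2 : (∑ k ∈ Finset.Ioc K (n-K), f k) ≤ ε₀ * Q n + ε₀ * Q n := by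
    have hterm : ∀ k ∈ Finset.Ioc K (n-K), f k ≤ t k * b + t k * Pk k := by
      intro k hk
      have := habs_le k
      have h3 := htn k
      calc f k ≤ t k * (b + Pk k) := mul_le_mul_of_nonneg_left (habs_le k) (htn k)
        _ = t k * b + t k * Pk k := mul_add _ _ _
    calc (∑ k ∈ Finset.Ioc K (n-K), f k)
        ≤ ∑ k ∈ Finset.Ioc K (n-K), (t k * b + t k * Pk k) := Finset.sum_le_sum hterm
      _ = (∑ k ∈ Finset.Ioc K (n-K), t k) * b + ∑ k ∈ Finset.Ioc K (n-K), t k * Pk k := by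
          rw [Finset.sum_add_distrib, Finset.sum_mul]
      _ ≤ ε₀ * Q n + ε₀ * Q n := by
          have hA : (∑ k ∈ Finset.Ioc K (n-K), t k) * b ≤ ε₀ * Q n := by
            rw [hIocF K (n-K) (by omega)]
            have h1 : F (n-K) - F K ≤ p - F K := by linarith [hFle (n-K)]
            have h2 : p - F K < ε₀ := by
              have := hK₁ K (by omega)
              simpa using this
            have h3 : 0 ≤ F (n-K) - F K := by
              have := hFmono (show K ≤ n - K by omega)
              linarith
            have h4 : b ≤ Q n := hbound n hn1 x
            nlinarith [hPnn n x]
          have hB : (∑ k ∈ Finset.Ioc K (n-K), t k * Pk k) ≤ ε₀ * Q n := by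
            have hterm2 : ∀ k ∈ Finset.Ioc K (n-K), t k * Pk k ≤ Q k * Q (n-k) := by
              intro k hk
              rw [Finset.mem_Ioc] at hk
              have hk1 : 1 ≤ k := by omega
              have hnk1 : 1 ≤ n - k := by omega
              exact mul_le_mul (ht_le_Q k hk1) (hbound (n-k) hnk1 x) (hPnn (n-k) x)
                (le_of_lt (hQpos k hk1))
            have hsub : Finset.Ioc K (n-K) ⊆ Finset.Ioc Kc (n-Kc) := by
              intro k hk
              rw [Finset.mem_Ioc] at hk ⊢
              omega
            calc (∑ k ∈ Finset.Ioc K (n-K), t k * Pk k)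
                ≤ ∑ k ∈ Finset.Ioc K (n-K), Q k * Q (n-k) := Finset.sum_le_sum hterm2
              _ ≤ ∑ k ∈ Finset.Ioc Kc (n-Kc), Q k * Q (n-k) := by
                  apply Finset.sum_le_sum_of_subset_of_nonneg hsub
                  intro k hk _
                  rw [Finset.mem_Ioc] at hk
                  exact le_of_lt (mul_pos (hQpos k (by omega)) (hQpos (n-k) (by omega)))
              _ ≤ ε₀ * Q n := hNc n hnNc
          exact add_le_add hA hB
  -- part 3 : k close to n
  have hpart3 : (∑ k ∈ Finset.Ioc (n-K) n, f k) ≤ ε₀ * Q n + 2 * (ε₀ * Q n) := by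
    have hterm : ∀ k ∈ Finset.Ioc (n-K) n, f k ≤ t k * b + t k * Pk k := by
      intro k hk
      calc f k ≤ t k * (b + Pk k) := mul_le_mul_of_nonneg_left (habs_le k) (htn k)
        _ = t k * b + t k * Pk k := mul_add _ _ _
    calc (∑ k ∈ Finset.Ioc (n-K) n, f k)
        ≤ ∑ k ∈ Finset.Ioc (n-K) n, (t k * b + t k * Pk k) := Finset.sum_le_sum hterm
      _ = (∑ k ∈ Finset.Ioc (n-K) n, t k) * b + ∑ k ∈ Finset.Ioc (n-K) n, t k * Pk k := by
          rw [Finset.sum_add_distrib, Finset.sum_mul]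
      _ ≤ ε₀ * Q n + 2 * (ε₀ * Q n) := by
          have hA : (∑ k ∈ Finset.Ioc (n-K) n, t k) * b ≤ ε₀ * Q n := by
            rw [hIocF (n-K) n (by omega)]
            have h1 : F n - F (n-K) ≤ p - F (n-K) := by linarith [hFle n]
            have h2 : p - F (n-K) < ε₀ := by
              have := hK₁ (n-K) (by omega)
              simpa using this
            have h3 : 0 ≤ F n - F (n-K) := by
              have := hFmono (show n - K ≤ n by omega)
              linarith
            have h4 : b ≤ Q n := hbound n hn1 x
            nlinarith [hPnn n x]
          have hB : (∑ k ∈ Finset.Ioc (n-K) n, t k * Pk k) ≤ 2 * (ε₀ * Q n) := by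
            have hterm2 : ∀ k ∈ Finset.Ioc (n-K) n, t k * Pk k ≤ (2 * Q n) * (ε₀/(K+1)) := by
              intro k hk
              rw [Finset.mem_Ioc] at hk
              have hj : n - k < K := by omega
              have hkeq : n - (n - k) = k := by omega
              -- t k ≤ 2 Q n
              have htk : t k ≤ 2 * Q n := by
                have hsm := hNs n hnNs (n-k) (by omega) 0
                rw [hkeq] at hsm
                have h5 : (μ {ω | S k ω = 0}).toReal
                    ≤ (μ {ω | S n ω = 0}).toReal + ε₀ * Q n := by
                  have := abs_le.1 hsm
                  linarith [this.2]
                have h6 : (μ {ω | S n ω = 0}).toReal ≤ Q n := hbound n hn1 0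
                have h7 : t k ≤ (μ {ω | S k ω = 0}).toReal :=
                  ENNReal.toReal_mono (measure_ne_top μ _) (measure_mono (fun ω h => h.1))
                nlinarith
              -- Pk k ≤ ε₀/(K+1)
              have hPkk : Pk k ≤ ε₀/(K+1) := by
                have hsub : {ω | S (n-k) ω = x} ⊆ {ω | r n < ‖S (n-k) ω‖} := by
                  intro ω hω
                  simp only [Set.mem_setOf_eq] at hω ⊢
                  rw [hω]
                  exact hx
                calc Pk k ≤ (μ {ω | r n < ‖S (n-k) ω‖}).toReal :=
                      ENNReal.toReal_mono (measure_ne_top μ _) (measure_mono hsub)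
                  _ ≤ ε₀/(K+1) := hNr n hnNr (n-k) hj
              exact mul_le_mul htk hPkk (hPnn (n-k) x) (by positivity)
            calc (∑ k ∈ Finset.Ioc (n-K) n, t k * Pk k)
                ≤ (Finset.Ioc (n-K) n).card • ((2 * Q n) * (ε₀/(K+1))) :=
                  Finset.sum_le_card_nsmul _ _ _ hterm2
              _ = (K:ℝ) * ((2 * Q n) * (ε₀/(K+1))) := by
                  rw [Nat.card_Ioc, nsmul_eq_mul]
                  congr 2
                  omega
              _ ≤ 2 * (ε₀ * Q n) := by
                  have hK0 : (0:ℝ) < (K:ℝ) + 1 := by positivity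
                  rw [div_eq_mul_inv]
                  have hfrac : (K:ℝ) * ((K:ℝ)+1)⁻¹ ≤ 1 := by
                    rw [← div_eq_mul_inv, div_le_one hK0]
                    linarith
                  have h2Q : (0:ℝ) ≤ 2 * Q n * ε₀ := by positivity
                  calc (K:ℝ) * ((2 * Q n) * (ε₀ * ((K:ℝ)+1)⁻¹))
                      = (2 * Q n * ε₀) * ((K:ℝ) * ((K:ℝ)+1)⁻¹) := by ring
                    _ ≤ (2 * Q n * ε₀) * 1 := mul_le_mul_of_nonneg_left hfrac h2Q
                    _ = 2 * (ε₀ * Q n) := by ring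
          exact add_le_add hA hB
  -- put everything together
  have htotal : |a - (1-p)*b| ≤ 7 * (ε₀ * Q n) := by
    have := habs
    rw [← hsplit1, ← hsplit2] at this
    linarith [hpart0, hpart1, hpart2, hpart3]
  calc |a - (1-p)*b| ≤ 7 * (ε₀ * Q n) := htotal
    _ ≤ 7 * ((ε/8) * Q n) := by nlinarith
    _ ≤ ε * Q n := by nlinarith
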